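/- Let J = [[0,−I_d],[I_d,0]] and suppose Y is a 2d×2d matrix with Y*JY = J, blocked as Y = (θ, φ) with 2d×d blocks θ, φ. Let β be a d×2d matrix with rank β = d, ββ* = I_d, βJβ* = 0, and suppose βφ is invertible. Define M = −(βφ)⁻¹(βθ) and χ = θ + φM. Then χ* J χ = 0. -/

import Mathlib

open Matrix

lemma aux_trace_zero {n : Type*} [Fintype n] [DecidableEq n] (Q : Matrix n n ℂ)
    (hH : Qᴴ = Q) (hI : Q * Q = Q) (hT : Q.trace = 0) : Q = 0 := by
  have h1 : (Qᴴ * Q).trace = 0 := by rw [hH, hI, hT]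
  have h2 : ∑ j, ∑ i, Complex.normSq (Q i j) = 0 := by
    have := congrArg Complex.re h1
    simpa [Matrix.trace, Matrix.diag, Matrix.mul_apply, Matrix.conjTranspose_apply,
      Complex.normSq_eq_conj_mul_self, Complex.re_sum, Complex.normSq_apply] using this
  ext i j
  have h3 : ∀ j ∈ Finset.univ, ∑ i, Complex.normSq (Q i j) = 0 := by
    intro j _
    have := (Finset.sum_eq_zero_iff_of_nonneg (fun j _ => Finset.sum_nonneg
      (fun i _ => Complex.normSq_nonneg _))).mp h2
    exact this j (Finset.mem_univ j)
  have h4 := (Finset.sum_eq_zero_iff_of_nonneg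
    (fun i _ => Complex.normSq_nonneg (Q i j))).mp (h3 j (Finset.mem_univ j)) i
    (Finset.mem_univ i)
  simpa using Complex.normSq_eq_zero.mp h4


theorem stmt13 (d : ℕ) (θ φ : Matrix (Fin d ⊕ Fin d) (Fin d) ℂ)
    (J : Matrix (Fin d ⊕ Fin d) (Fin d ⊕ Fin d) ℂ)
    (hJ : J = Matrix.fromBlocks 0 (-1) 1 0)
    (hY : (Matrix.fromCols θ φ)ᴴ * J * Matrix.fromCols θ φ = J)
    (β : Matrix (Fin d) (Fin d ⊕ Fin d) ℂ)
    (hrankβ : β.rank = d) (hβ : β * βᴴ = 1) (hβJ : β * J * βᴴ = 0)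
    (hinv : IsUnit (β * φ))
    (M : Matrix (Fin d) (Fin d) ℂ) (χ : Matrix (Fin d ⊕ Fin d) (Fin d) ℂ)
    (hM : M = -((β * φ)⁻¹ * (β * θ)))
    (hχ : χ = θ + φ * M) :
    χᴴ * J * χ = 0 := by
  have hdet : IsUnit (β * φ).det := (Matrix.isUnit_iff_isUnit_det _).mp hinv
  have hβχ : β * χ = 0 := by
    have h1 : β * (φ * ((β * φ)⁻¹ * (β * θ))) = β * θ := by
      rw [← Matrix.mul_assoc, ← Matrix.mul_assoc, Matrix.mul_assoc (β * φ),
        ← Matrix.mul_assoc (β * φ), Matrix.mul_nonsing_inv _ hdet, Matrix.one_mul]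
    rw [hχ, hM, Matrix.mul_add, Matrix.mul_neg, Matrix.mul_neg, h1, add_neg_cancel]
  have hJH : Jᴴ = -J := by
    subst hJ
    simp only [Matrix.fromBlocks_conjTranspose, Matrix.conjTranspose_zero,
      Matrix.conjTranspose_one, Matrix.conjTranspose_neg, Matrix.fromBlocks_neg,
      neg_zero, neg_neg]
  have hJ2 : J * J = -1 := by
    subst hJ
    simp only [Matrix.fromBlocks_multiply, Matrix.fromBlocks_neg]
    simp [← Matrix.fromBlocks_one, Matrix.fromBlocks_neg]
  have hJJ : Jᴴ * J = 1 := by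
    rw [hJH, Matrix.neg_mul, hJ2, neg_neg]
  have hβJH : β * Jᴴ * βᴴ = 0 := by
    rw [hJH, Matrix.mul_neg, Matrix.neg_mul, hβJ, neg_zero]
  set P : Matrix (Fin d ⊕ Fin d) (Fin d ⊕ Fin d) ℂ := βᴴ * β with hP
  set R : Matrix (Fin d ⊕ Fin d) (Fin d ⊕ Fin d) ℂ := J * βᴴ * β * Jᴴ with hR
  have hPP : P * P = P := by
    rw [hP, Matrix.mul_assoc, ← Matrix.mul_assoc β, hβ, Matrix.one_mul]
  have hRR : R * R = R := by
    rw [hR]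
    calc J * βᴴ * β * Jᴴ * (J * βᴴ * β * Jᴴ)
        = J * βᴴ * β * (Jᴴ * J) * βᴴ * β * Jᴴ := by
          simp only [Matrix.mul_assoc]
      _ = J * βᴴ * (β * βᴴ) * β * Jᴴ := by rw [hJJ]; simp only [Matrix.mul_assoc, Matrix.one_mul]
      _ = J * βᴴ * β * Jᴴ := by rw [hβ]; simp only [Matrix.mul_assoc, Matrix.one_mul]
  have hPR : P * R = 0 := by
    rw [hP, hR]
    calc βᴴ * β * (J * βᴴ * β * Jᴴ)
        = βᴴ * (β * J * βᴴ) * β * Jᴴ := by simp only [Matrix.mul_assoc]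
      _ = 0 := by rw [hβJ]; simp
  have hRP : R * P = 0 := by
    rw [hP, hR]
    calc J * βᴴ * β * Jᴴ * (βᴴ * β)
        = J * βᴴ * (β * Jᴴ * βᴴ) * β := by simp only [Matrix.mul_assoc]
      _ = 0 := by rw [hβJH]; simp
  have hPH : Pᴴ = P := by
    rw [hP, Matrix.conjTranspose_mul, Matrix.conjTranspose_conjTranspose]
  have hRH : Rᴴ = R := by
    rw [hR]
    simp only [Matrix.conjTranspose_mul, Matrix.conjTranspose_conjTranspose,
      Matrix.mul_assoc]
  have htrP : P.trace = (d : ℂ) := by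
    rw [hP, Matrix.trace_mul_comm, hβ, Matrix.trace_one]
    simp
  have htrR : R.trace = (d : ℂ) := by
    rw [hR, Matrix.trace_mul_comm, ← Matrix.mul_assoc, ← Matrix.mul_assoc, hJJ,
      Matrix.one_mul, Matrix.trace_mul_comm, hβ, Matrix.trace_one]
    simp
  have htr1 : (1 : Matrix (Fin d ⊕ Fin d) (Fin d ⊕ Fin d) ℂ).trace = (2 * d : ℂ) := by
    rw [Matrix.trace_one]
    simp
    ring
  have hQ : (1 : Matrix (Fin d ⊕ Fin d) (Fin d ⊕ Fin d) ℂ) - P - R = 0 := by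
    apply aux_trace_zero
    · simp [hPH, hRH]
    · have : ∀ A B C D : Matrix (Fin d ⊕ Fin d) (Fin d ⊕ Fin d) ℂ,
        (1 - A - B) * (1 - C - D) = 1 - C - D - A + A * C + A * D - B + B * C + B * D := by
        intro A B C D; noncomm_ring
      rw [this, hPP, hRR, hPR, hRP]
      abel
    · simp [htrP, htrR, htr1]
      ring
  have hone : (1 : Matrix (Fin d ⊕ Fin d) (Fin d ⊕ Fin d) ℂ) = P + R := by
    have := hQ
    linear_combination (norm := noncomm_ring) this
  have hχR : χ = R * χ := by
    conv_lhs => rw [← Matrix.one_mul χ, hone]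
    rw [Matrix.add_mul, hP, Matrix.mul_assoc, hβχ, Matrix.mul_zero, zero_add]
  have hJχ : J * χ = -(βᴴ * (β * (Jᴴ * χ))) := by
    conv_lhs => rw [hχR]
    rw [hR]
    calc J * (J * βᴴ * β * Jᴴ * χ) = (J * J) * (βᴴ * (β * (Jᴴ * χ))) := by
          simp only [Matrix.mul_assoc]
      _ = -(βᴴ * (β * (Jᴴ * χ))) := by rw [hJ2]; simp
  rw [Matrix.mul_assoc, hJχ, Matrix.mul_neg, ← Matrix.mul_assoc,
    ← Matrix.conjTranspose_mul, hβχ]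
  simp
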